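/- arXiv:0901.4349 — 2 statements merged into one kernel-verified Lean document; each statement's English description precedes it below -/
import Mathlib

section
/- For every natural number n ≥ 3, the numbers p n 1 satisfy the linear fractional recurrence p n 1 = (1 + 2 · p (n−1) 1) / (2 + 2 · p (n−1) 1) (Watrous's conjectured recurrence). -/
noncomputable def A : ℝ := 2 + Real.sqrt 2
noncomputable def B : ℝ := 2 - Real.sqrt 2

/-- The absorption probability of the two-barrier Hadamard quantum walk on `{0,…,n}`
started at site `j`, given by the explicit formula of Bach–Borisov. -/
noncomputable def p (n j : ℕ) : ℝ :=
  (Real.sqrt 2 / 4) * ((A ^ (n - j) - B ^ (n - j)) * (A ^ (j - 1) + B ^ (j - 1))) /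
    (A ^ (n - 1) + B ^ (n - 1))

theorem key (s x y : ℝ) (hs : s * s = 2)
    (h1 : (2+s)*x + (2-s)*y ≠ 0) (h2 : x + y ≠ 0)
    (h3 : 2 + 2 * (s / 4 * ((x - y) * 2) / (x + y)) ≠ 0) :
    s / 4 * (((2+s)*x - (2-s)*y) * 2) / ((2+s)*x + (2-s)*y) =
      (1 + 2 * (s / 4 * ((x - y) * 2) / (x + y))) /
      (2 + 2 * (s / 4 * ((x - y) * 2) / (x + y))) := by
  rw [div_eq_div_iff h1 h3]
  field_simp
  ring_nf
  linear_combination (32*x*y + 16*x^2 + 16*y^2 + s*(8*x^2 - 8*y^2)) * hs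

/-- Watrous's recurrence: for `n ≥ 3`,
`p n 1 = (1 + 2 p (n-1) 1) / (2 + 2 p (n-1) 1)`. -/
theorem watrous_recurrence (n : ℕ) (hn : 3 ≤ n) :
    p n 1 = (1 + 2 * p (n - 1) 1) / (2 + 2 * p (n - 1) 1) := by
  obtain ⟨k, rfl⟩ : ∃ k, n = k + 3 := ⟨n - 3, by omega⟩
  have hs : Real.sqrt 2 * Real.sqrt 2 = 2 := Real.mul_self_sqrt (by norm_num)
  have hs0 : (0:ℝ) < Real.sqrt 2 := Real.sqrt_pos.mpr (by norm_num)
  have hs2 : Real.sqrt 2 < 2 := by nlinarith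
  have hA : 0 < A := by unfold A; linarith
  have hB : 0 < B := by unfold B; linarith
  have hAB : B < A := by unfold A B; linarith
  simp only [p]
  have e1 : k + 3 - 1 = k + 2 := by omega
  rw [e1]
  norm_num
  set x : ℝ := A ^ (k + 1) with hx
  set y : ℝ := B ^ (k + 1) with hy
  have hxpos : 0 < x := pow_pos hA _
  have hypos : 0 < y := pow_pos hB _
  have hyx : y ≤ x := pow_le_pow_left₀ hB.le hAB.le _
  have hx2 : A ^ (k + 2) = A * x := by rw [hx, pow_succ]; ring
  have hy2 : B ^ (k + 2) = B * y := by rw [hy, pow_succ]; ring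
  rw [hx2, hy2]
  clear_value x y
  have hden1 : A * x + B * y > 0 := by positivity
  have hden2 : (0:ℝ) < x + y := by positivity
  have hq : Real.sqrt 2 / 4 * ((x - y) * 2) / (x + y) ≥ 0 := by
    apply div_nonneg _ hden2.le
    nlinarith
  have hden3 : 2 + 2 * (Real.sqrt 2 / 4 * ((x - y) * 2) / (x + y)) > 0 := by linarith
  have := key (Real.sqrt 2) x y hs (by unfold A B at hden1; linarith) hden2.ne' hden3.ne'
  unfold A B
  convert this using 3
end

section
/- For every real number α with 0 < α < 1, the sequence n ↦ p n ⌈α·n⌉ converges to √2/4 as n → ∞; that is, from a starting site a fixed proportion of the way into the lattice, the probability of absorption at the left barrier tends to √2/4 ≈ 0.35355. -/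
lemma sqrt2_lt_two : Real.sqrt 2 < 2 := by
  nlinarith [Real.sq_sqrt (by norm_num : (2:ℝ) ≥ 0), Real.sqrt_nonneg 2]

lemma hA : (0:ℝ) < A := by unfold A; nlinarith [Real.sqrt_nonneg 2]
lemma hB : (0:ℝ) < B := by unfold B; nlinarith [sqrt2_lt_two]
lemma hBA : B < A := by unfold A B; nlinarith [Real.sqrt_pos.2 (by norm_num : (2:ℝ) > 0)]

lemma p_eq (n j : ℕ) (h1 : 1 ≤ j) (h2 : j ≤ n) :
    p n j = (Real.sqrt 2 / 4) *
      (1 + (B/A)^(j-1) - (B/A)^(n-j) - (B/A)^(n-1)) / (1 + (B/A)^(n-1)) := by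
  have key : (n - j) + (j - 1) = n - 1 := by omega
  have hA' := hA
  have hB' := hB
  have hAne : A ≠ 0 := ne_of_gt hA'
  unfold p
  rw [← key]
  have hden : (0:ℝ) < A ^ (n-j+(j-1)) + B ^ (n-j+(j-1)) := by positivity
  have hden2 : (0:ℝ) < 1 + (B/A) ^ (n-j+(j-1)) := by positivity
  rw [div_pow, div_pow, div_pow]
  field_simp
  ring

/-- From a starting site a fixed proportion `α` of the way into the lattice, the
probability of absorption at the left barrier tends to `√2/4` as `n → ∞`. -/
theorem p_interior_tendsto (α : ℝ) (h0 : 0 < α) (h1 : α < 1) :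
    Filter.Tendsto (fun n : ℕ => p n ⌈α * n⌉₊) Filter.atTop (nhds (Real.sqrt 2 / 4)) := by
  set r : ℝ := B / A with hr
  have hr0 : 0 ≤ r := le_of_lt (div_pos hB hA)
  have hr1 : r < 1 := (div_lt_one hA).2 hBA
  have hrpow : Filter.Tendsto (fun k : ℕ => r ^ k) Filter.atTop (nhds 0) :=
    tendsto_pow_atTop_nhds_zero_of_lt_one hr0 hr1
  -- exponent sequences tend to atTop
  have hc1 : Filter.Tendsto (fun n : ℕ => ⌈α * n⌉₊ - 1) Filter.atTop Filter.atTop := by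
    rw [Filter.tendsto_atTop]
    intro b
    filter_upwards [Filter.eventually_ge_atTop (⌈((b:ℝ)+1)/α⌉₊ + 1)] with n hn
    have hnR : ((b:ℝ)+1)/α ≤ n := le_trans (Nat.le_ceil _) (by exact_mod_cast Nat.le_of_succ_le hn)
    have : (b:ℝ) + 1 ≤ α * n := by
      rw [div_le_iff₀ h0] at hnR; linarith [hnR]
    have hlt : b < ⌈α * n⌉₊ := Nat.lt_ceil.2 (by linarith)
    omega
  have hc2 : Filter.Tendsto (fun n : ℕ => n - ⌈α * n⌉₊) Filter.atTop Filter.atTop := by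
    rw [Filter.tendsto_atTop]
    intro b
    filter_upwards [Filter.eventually_ge_atTop (⌈((b:ℝ)+2)/(1-α)⌉₊ + 1)] with n hn
    have hnR : ((b:ℝ)+2)/(1-α) ≤ n := le_trans (Nat.le_ceil _) (by exact_mod_cast Nat.le_of_succ_le hn)
    have h1a : (0:ℝ) < 1 - α := by linarith
    have hkey : (b:ℝ) + 2 ≤ (1-α) * n := by
      rw [div_le_iff₀ h1a] at hnR; linarith
    have hceil : (⌈α * n⌉₊ : ℝ) < α * n + 1 :=
      Nat.ceil_lt_add_one (by positivity)
    have : (⌈α * n⌉₊ : ℝ) + b ≤ n := by nlinarith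
    have : ⌈α * n⌉₊ + b ≤ n := by exact_mod_cast this
    omega
  have hc3 : Filter.Tendsto (fun n : ℕ => n - 1) Filter.atTop Filter.atTop :=
    Filter.tendsto_sub_atTop_nat 1
  have hx := hrpow.comp hc1
  have hy := hrpow.comp hc2
  have hz := hrpow.comp hc3
  have hlim : Filter.Tendsto
      (fun n : ℕ => (Real.sqrt 2 / 4) *
        (1 + r^(⌈α*n⌉₊-1) - r^(n-⌈α*n⌉₊) - r^(n-1)) / (1 + r^(n-1)))
      Filter.atTop (nhds ((Real.sqrt 2 / 4) * (1 + 0 - 0 - 0) / (1 + 0))) := by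
    apply Filter.Tendsto.div
    · exact (tendsto_const_nhds.mul (((tendsto_const_nhds.add hx).sub hy).sub hz))
    · exact tendsto_const_nhds.add hz
    · norm_num
  simp only [add_zero, sub_zero, mul_one, div_one] at hlim
  refine hlim.congr' ?_
  filter_upwards [Filter.eventually_ge_atTop 1] with n hn
  have hj1 : 1 ≤ ⌈α * n⌉₊ := Nat.one_le_iff_ne_zero.2 (by
    have : 0 < ⌈α * n⌉₊ := Nat.ceil_pos.2 (by positivity)
    omega)
  have hn' : (1:ℝ) ≤ n := by exact_mod_cast hn
  have hjn : ⌈α * n⌉₊ ≤ n := Nat.ceil_le.2 (by nlinarith)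
  rw [p_eq n _ hj1 hjn, hr]
end
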